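/- Let K be a field of characteristic zero, C a K-linear category, and A an object of C such that the K-algebra End_C(A) is finite dimensional over K. Let e, e' : A → A be idempotent endomorphisms. Then the objects (A, e) and (A, e') of the Karoubi envelope Karoubi(C) are isomorphic if and only if e and e' are conjugate in End_C(A), i.e. there exists an invertible φ ∈ End_C(A) with e' = φ ∘ e ∘ φ⁻¹. -/

import Mathlib

universe u v
section Aux
variable {S : Type v} [Ring S]
variable {M P Q : Type v} [AddCommGroup M] [AddCommGroup P] [AddCommGroup Q]
  [Module S M] [Module S P] [Module S Q]

/-- Shear on the first coordinate. -/
def shear1 (w : P →ₗ[S] M) : (M × P) ≃ₗ[S] (M × P) where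
  toFun x := (x.1 + w x.2, x.2)
  invFun x := (x.1 - w x.2, x.2)
  left_inv x := by simp
  right_inv x := by simp
  map_add' x y := by simp [Prod.ext_iff]; abel
  map_smul' s x := by simp [Prod.ext_iff, smul_add]

/-- Shear on the second coordinate. -/
def shear2 (w : M →ₗ[S] Q) : (M × Q) ≃ₗ[S] (M × Q) where
  toFun x := (x.1, x.2 + w x.1)
  invFun x := (x.1, x.2 - w x.1)
  left_inv x := by simp
  right_inv x := by simp
  map_add' x y := by simp [Prod.ext_iff]; abel
  map_smul' s x := by simp [Prod.ext_iff, smul_add]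

theorem schur_cancel (α : (M × P) ≃ₗ[S] (M × Q))
    (hb : Function.Bijective fun m : M => (α (m, 0)).1) : Nonempty (P ≃ₗ[S] Q) := by
  let fl : M →ₗ[S] M := (LinearMap.fst S M Q).comp (α.toLinearMap.comp (LinearMap.inl S M P))
  have hfl : Function.Bijective fl := hb
  let F : M ≃ₗ[S] M := LinearEquiv.ofBijective fl hfl
  let g : P →ₗ[S] M := (LinearMap.fst S M Q).comp (α.toLinearMap.comp (LinearMap.inr S M P))
  let h' : M →ₗ[S] Q := (LinearMap.snd S M Q).comp (α.toLinearMap.comp (LinearMap.inl S M P))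
  let β : (M × P) ≃ₗ[S] (M × Q) :=
    (shear1 (-(F.symm.toLinearMap.comp g))).trans (α.trans (shear2 (-(h'.comp F.symm.toLinearMap))))
  have hsplit : ∀ (m : M) (p : P), α (m, p) = (fl m + g p, h' m + (α (0, p)).2) := by
    intro m p
    have : ((m, p) : M × P) = (m, 0) + (0, p) := by simp
    rw [this, map_add]
    have h1 : α (m, 0) = (fl m, h' m) := rfl
    have h2 : α (0, p) = (g p, (α (0, p)).2) := rfl
    rw [h1, h2]; rfl
  have hβ1 : ∀ (m : M) (p : P), (β (m, p)).1 = fl m := by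
    intro m p
    show ((shear2 (-(h'.comp F.symm.toLinearMap))) (α ((shear1 (-(F.symm.toLinearMap.comp g))) (m, p)))).1 = fl m
    have : (shear1 (-(F.symm.toLinearMap.comp g))) (m, p) = (m - F.symm (g p), p) := by
      simp [shear1, sub_eq_add_neg]
    rw [this]
    have : ((shear2 (-(h'.comp F.symm.toLinearMap))) (α (m - F.symm (g p), p))).1
        = (α (m - F.symm (g p), p)).1 := rfl
    rw [this, hsplit]
    show fl (m - F.symm (g p)) + g p = fl m
    have hF : fl (F.symm (g p)) = g p := F.apply_symm_apply (g p)
    rw [map_sub, hF]; abel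
  let s : P →ₗ[S] Q := (LinearMap.snd S M Q).comp (β.toLinearMap.comp (LinearMap.inr S M P))
  have hs : ∀ p, β (0, p) = (0, s p) := by
    intro p
    have h1 : (β (0, p)).1 = 0 := by rw [hβ1]; simp
    have h2 : (β (0, p)).2 = s p := rfl
    exact Prod.ext h1 h2
  have hinj : Function.Injective s := by
    intro p p' hpp
    have : β (0, p) = β (0, p') := by rw [hs, hs, hpp]
    have := β.injective this
    exact congrArg Prod.snd this
  have hsurj : Function.Surjective s := by
    intro q
    obtain ⟨x, hx⟩ : ∃ x, β x = (0, q) := ⟨β.symm (0, q), β.apply_symm_apply _⟩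
    have hx1 : fl x.1 = 0 := by rw [← hβ1 x.1 x.2]; rw [show ((x.1, x.2) : M × P) = x from rfl, hx]
    have hx1' : x.1 = 0 := hfl.injective (by simpa using hx1)
    refine ⟨x.2, ?_⟩
    have hxx : ((0, x.2) : M × P) = x := Prod.ext hx1'.symm rfl
    have : β (0, x.2) = (0, q) := by rw [hxx, hx]
    rw [hs] at this
    exact (Prod.ext_iff.mp this).2
  exact ⟨LinearEquiv.ofBijective s ⟨hinj, hsurj⟩⟩
end Aux
section Nil
variable (K : Type u) [Field K] {S : Type v} [Ring S] [Algebra K S]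
variable {M : Type v} [AddCommGroup M] [Module S M] [Module K M] [IsScalarTower K S M]
  [FiniteDimensional K M]

include K

theorem pow_apply_eq_zero_of_not_bijective
    (hM : ∀ N N' : Submodule S M, IsCompl N N' → N = ⊥ ∨ N = ⊤)
    (f : M →ₗ[S] M) (hf : ¬ Function.Bijective f) : ∃ n, ∀ x, (f ^ n) x = 0 := by
  haveI : IsNoetherian S M := isNoetherian_of_tower K inferInstance
  haveI : IsArtinian S M := isArtinian_of_tower K inferInstance
  obtain ⟨n, hn⟩ := Filter.eventually_atTop.mp f.eventually_isCompl_ker_pow_range_pow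
  have h := hn (n + 1) (Nat.le_succ n)
  rcases hM _ _ h with hk | hk
  · exfalso
    have hinj : Function.Injective ⇑(f ^ (n + 1)) := by
      rw [← LinearMap.ker_eq_bot]; exact hk
    have hfinj : Function.Injective ⇑f := by
      intro x y hxy
      apply hinj
      have hp : f ^ (n + 1) = (f ^ n) * f := by rw [pow_succ]
      rw [hp]
      show (f ^ n) (f x) = (f ^ n) (f y)
      rw [hxy]
    exact hf ⟨hfinj, IsArtinian.surjective_of_injective_endomorphism f hfinj⟩
  · exact ⟨n + 1, fun x =>
      LinearMap.mem_ker.mp (hk ▸ Submodule.mem_top : x ∈ LinearMap.ker (f ^ (n + 1)))⟩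

theorem bijective_id_sub_of_pow_zero (t : M →ₗ[S] M) {n : ℕ} (hn : ∀ x, (t ^ n) x = 0) :
    Function.Bijective ⇑((LinearMap.id - t : M →ₗ[S] M)) := by
  haveI : IsArtinian S M := isArtinian_of_tower K inferInstance
  have hinj : Function.Injective ⇑((LinearMap.id - t : M →ₗ[S] M)) := by
    have key : ∀ z : M, z = t z → z = 0 := by
      intro z hz
      have hk : ∀ k : ℕ, (t ^ k) z = z := by
        intro k; induction k with
        | zero => rfl
        | succ k ih => rw [pow_succ]; show (t ^ k) (t z) = z; rw [← hz, ih]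
      rw [← hk n, hn]
    intro x y hxy
    simp only [LinearMap.sub_apply, LinearMap.id_apply] at hxy
    have hz : (x - y) = t (x - y) := by
      rw [map_sub]
      have h2 : x - t x = y - t y := hxy
      have h3 : x - y - (t x - t y) = (x - t x) - (y - t y) := by abel
      have h4 : x - y - (t x - t y) = 0 := by rw [h3, h2, sub_self]
      exact sub_eq_zero.mp h4
    have := key _ hz
    exact sub_eq_zero.mp this
  exact ⟨hinj, IsArtinian.surjective_of_injective_endomorphism _ hinj⟩
end Nil

theorem cancel_of_prod_equiv (K : Type u) [Field K] (S : Type v) [Ring S] [Algebra K S] :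
    ∀ (n : ℕ) (M P Q : Type v) [AddCommGroup M] [AddCommGroup P] [AddCommGroup Q]
      [Module S M] [Module S P] [Module S Q] [Module K M] [Module K P] [Module K Q]
      [IsScalarTower K S M] [IsScalarTower K S P] [IsScalarTower K S Q]
      [FiniteDimensional K M],
      Module.finrank K M = n → ((M × P) ≃ₗ[S] (M × Q)) → Nonempty (P ≃ₗ[S] Q) := by
  intro n
  induction n using Nat.strong_induction_on with
  | _ n IH =>
  intro M P Q _ _ _ _ _ _ _ _ _ _ _ _ _ hrank α
  by_cases hM : ∀ N N' : Submodule S M, IsCompl N N' → N = ⊥ ∨ N = ⊤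
  · by_cases hbij : Function.Bijective fun m : M => (α (m, 0)).1
    · exact schur_cancel α hbij
    · haveI : IsArtinian S M := isArtinian_of_tower K inferInstance
      set fl : M →ₗ[S] M :=
        (LinearMap.fst S M Q).comp (α.toLinearMap.comp (LinearMap.inl S M P)) with hfl_def
      have hflnb : ¬ Function.Bijective ⇑fl := hbij
      obtain ⟨n₁, hn₁⟩ := pow_apply_eq_zero_of_not_bijective K hM fl hflnb
      set f' : M →ₗ[S] M :=
        (LinearMap.fst S M P).comp (α.symm.toLinearMap.comp (LinearMap.inl S M Q)) with hf'
      set g' : Q →ₗ[S] M :=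
        (LinearMap.fst S M P).comp (α.symm.toLinearMap.comp (LinearMap.inr S M Q)) with hg'
      set h2 : M →ₗ[S] Q :=
        (LinearMap.snd S M Q).comp (α.toLinearMap.comp (LinearMap.inl S M P)) with hh2
      have key : ∀ m : M, f' (fl m) + g' (h2 m) = m := by
        intro m
        have e1 : α.symm (α (m, 0)) = (m, 0) := α.symm_apply_apply _
        have e2 : α (m, 0) = ((fl m, 0) : M × Q) + (0, h2 m) := by
          have e0 : α (m, 0) = (fl m, h2 m) := rfl
          rw [e0]; simp
        rw [e2, map_add] at e1
        have e3 := congrArg Prod.fst e1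
        simpa [hf', hg'] using e3
      have hff : ¬ Function.Bijective ⇑(f'.comp fl) := by
        intro hbb
        have hinj : Function.Injective ⇑fl := fun x y hxy => by
          apply hbb.injective; show f' (fl x) = f' (fl y); rw [hxy]
        exact hflnb ⟨hinj, IsArtinian.surjective_of_injective_endomorphism fl hinj⟩
      obtain ⟨n₂, hn₂⟩ := pow_apply_eq_zero_of_not_bijective K hM (f'.comp fl) hff
      have hgh : g'.comp h2 = LinearMap.id - f'.comp fl := by
        ext m
        simp only [LinearMap.comp_apply, LinearMap.sub_apply, LinearMap.id_apply]
        exact eq_sub_of_add_eq' (key m)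
      have hWb : Function.Bijective ⇑(g'.comp h2) := by
        rw [hgh]; exact bijective_id_sub_of_pow_zero K _ hn₂
      set W : M ≃ₗ[S] M := LinearEquiv.ofBijective _ hWb with hW
      set β : (M × P) ≃ₗ[S] (M × Q) := α.trans (shear1 (W.symm.toLinearMap.comp g')) with hβdef
      have hβ : Function.Bijective fun m : M => (β (m, 0)).1 := by
        have hfun : (fun m : M => (β (m, 0)).1) = fun m => fl m + m := by
          funext m
          show ((shear1 (W.symm.toLinearMap.comp g')) (α (m, 0))).1 = fl m + m
          have e1 : α (m, 0) = (fl m, h2 m) := rfl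
          rw [e1]
          show fl m + W.symm (g' (h2 m)) = fl m + m
          congr 1
          rw [LinearEquiv.symm_apply_eq]
          rfl
        rw [hfun]
        have h5 : ∀ x : M, ((-fl) ^ n₁) x = 0 := by
          intro x
          rw [neg_pow, Module.End.mul_apply, hn₁ x, map_zero]
        have h6 := bijective_id_sub_of_pow_zero K (-fl) h5
        have hid : (LinearMap.id - -fl : M →ₗ[S] M) = LinearMap.id + fl := sub_neg_eq_add _ _
        rw [hid] at h6
        have h7 : (fun m : M => fl m + m) = ⇑(LinearMap.id + fl : M →ₗ[S] M) := by
          funext m; simp [add_comm]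
        rw [h7]
        exact h6
      exact schur_cancel β hβ
  · push_neg at hM
    obtain ⟨N, N', hc, hNbot, hNtop⟩ := hM
    haveI : FiniteDimensional K ↥N := inferInstanceAs (FiniteDimensional K ↥(N.restrictScalars K))
    haveI : FiniteDimensional K ↥N' := inferInstanceAs (FiniteDimensional K ↥(N'.restrictScalars K))
    have hfr : ∀ (T : Submodule S M), T ≠ ⊤ → Module.finrank K ↥T < n := by
      intro T hT
      rw [← hrank]
      have h2 : T.restrictScalars K < ⊤ := lt_top_iff_ne_top.mpr (fun hh => hT (by
        ext x; simpa using Submodule.ext_iff.mp hh x))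
      exact Submodule.finrank_lt (K := K) (V := M) h2.ne
    have hN'top : N' ≠ ⊤ := by
      intro h
      exact hNbot (disjoint_top.mp (h ▸ hc.disjoint))
    have hrankN : Module.finrank K ↥N < n := hfr N hNtop
    have hrankN' : Module.finrank K ↥N' < n := hfr N' hN'top
    let eM : (↥N × ↥N') ≃ₗ[S] M := Submodule.prodEquivOfIsCompl N N' hc
    let aP : (↥N × (↥N' × P)) ≃ₗ[S] (M × P) :=
      (LinearEquiv.prodAssoc S ↥N ↥N' P).symm ≪≫ₗ (eM.prodCongr (LinearEquiv.refl S P))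
    let aQ : (↥N × (↥N' × Q)) ≃ₗ[S] (M × Q) :=
      (LinearEquiv.prodAssoc S ↥N ↥N' Q).symm ≪≫ₗ (eM.prodCongr (LinearEquiv.refl S Q))
    let α₂ : (↥N × (↥N' × P)) ≃ₗ[S] (↥N × (↥N' × Q)) := aP.trans (α.trans aQ.symm)
    obtain ⟨ψ⟩ := IH _ hrankN ↥N (↥N' × P) (↥N' × Q) rfl α₂
    exact IH _ hrankN' ↥N' P Q rfl ψ
section RMul
variable {S : Type v} [Ring S]

/-- Right multiplication as a left-module endomorphism. -/
def rMul (x : S) : S →ₗ[S] S where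
  toFun y := y * x
  map_add' y z := add_mul y z x
  map_smul' s y := mul_assoc s y x

@[simp] theorem rMul_apply (x y : S) : rMul x y = y * x := rfl

theorem mem_range_rMul_iff {e : S} (he : e * e = e) {x : S} :
    x ∈ LinearMap.range (rMul e) ↔ x * e = x := by
  constructor
  · rintro ⟨y, rfl⟩
    show y * e * e = y * e
    rw [mul_assoc, he]
  · intro h
    exact ⟨x, h⟩

theorem one_sub_idem {e : S} (he : e * e = e) : (1 - e) * (1 - e) = 1 - e := by
  rw [mul_sub, mul_one, sub_mul, one_mul, he]
  abel

theorem isCompl_rMul {e : S} (he : e * e = e) :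
    IsCompl (LinearMap.range (rMul e)) (LinearMap.range (rMul (1 - e))) := by
  constructor
  · rw [disjoint_iff, eq_bot_iff]
    intro x hx
    obtain ⟨h1, h2⟩ := Submodule.mem_inf.mp hx
    rw [mem_range_rMul_iff he] at h1
    rw [mem_range_rMul_iff (one_sub_idem he)] at h2
    have h3 : x * e = 0 := by
      rw [← h2, mul_assoc, sub_mul, one_mul, he, sub_self, mul_zero]
    rw [Submodule.mem_bot, ← h1, h3]
  · rw [codisjoint_iff, eq_top_iff]
    intro x _
    have hx : x = x * e + x * (1 - e) := by
      rw [mul_sub, mul_one]; abel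
    exact Submodule.mem_sup.mpr ⟨x * e, ⟨x, rfl⟩, x * (1 - e), ⟨x, rfl⟩, hx.symm⟩
end RMul

theorem exists_unit_conj (K : Type u) [Field K] {S : Type v} [Ring S] [Algebra K S]
    [FiniteDimensional K S] {e f a₀ b₀ : S} (he : e * e = e) (hf : f * f = f)
    (hab : a₀ * b₀ = e) (hba : b₀ * a₀ = f) :
    ∃ u : Sˣ, f = ↑u⁻¹ * e * ↑u := by
  set a := e * a₀ * f with ha_def
  set b := f * b₀ * e with hb_def
  have hea : e * a = a := by
    show e * (e * a₀ * f) = e * a₀ * f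
    rw [← mul_assoc, ← mul_assoc, he]
  have haf : a * f = a := by
    show e * a₀ * f * f = e * a₀ * f
    rw [mul_assoc (e * a₀), hf]
  have hfb : f * b = b := by
    show f * (f * b₀ * e) = f * b₀ * e
    rw [← mul_assoc, ← mul_assoc, hf]
  have hbe : b * e = b := by
    show f * b₀ * e * e = f * b₀ * e
    rw [mul_assoc (f * b₀), he]
  have hab' : a * b = e := by
    have h1 : a₀ * f * b₀ = e := by
      calc a₀ * f * b₀ = a₀ * (b₀ * a₀) * b₀ := by rw [hba]
      _ = (a₀ * b₀) * (a₀ * b₀) := by simp only [mul_assoc]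
      _ = e := by rw [hab, he]
    show (e * a₀ * f) * (f * b₀ * e) = e
    calc (e * a₀ * f) * (f * b₀ * e) = e * (a₀ * (f * f) * b₀) * e := by simp only [mul_assoc]
    _ = e * (a₀ * f * b₀) * e := by rw [hf, mul_assoc a₀]
    _ = e := by rw [h1, he, he]
  have hba' : b * a = f := by
    have h1 : b₀ * e * a₀ = f := by
      calc b₀ * e * a₀ = b₀ * (a₀ * b₀) * a₀ := by rw [hab]
      _ = (b₀ * a₀) * (b₀ * a₀) := by simp only [mul_assoc]
      _ = f := by rw [hba, hf]
    show (f * b₀ * e) * (e * a₀ * f) = f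
    calc (f * b₀ * e) * (e * a₀ * f) = f * (b₀ * (e * e) * a₀) * f := by simp only [mul_assoc]
    _ = f * (b₀ * e * a₀) * f := by rw [he, mul_assoc b₀]
    _ = f := by rw [h1, hf, hf]
  clear ha_def hb_def hab hba
  -- submodules
  set Pe := LinearMap.range (rMul e) with hPe
  set Pf := LinearMap.range (rMul f) with hPf
  set Me := LinearMap.range (rMul (1 - e)) with hMe
  set Mf := LinearMap.range (rMul (1 - f)) with hMf
  haveI : FiniteDimensional K ↥Pe :=
    inferInstanceAs (FiniteDimensional K ↥(Pe.restrictScalars K))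
  -- the isomorphism Pf ≃ Pe given by right multiplication by b (inverse: by a)
  have hmem1 : ∀ x : S, x ∈ Pf → x * b ∈ Pe := by
    intro x _
    rw [hPe, mem_range_rMul_iff he, mul_assoc, hbe]
  have hmem2 : ∀ x : S, x ∈ Pe → x * a ∈ Pf := by
    intro x _
    rw [hPf, mem_range_rMul_iff hf, mul_assoc, haf]
  let bMap : Pf →ₗ[S] Pe :=
    LinearMap.codRestrict Pe ((rMul b).comp (Submodule.subtype Pf)) (fun x => hmem1 x.1 x.2)
  let aMap : Pe →ₗ[S] Pf :=
    LinearMap.codRestrict Pf ((rMul a).comp (Submodule.subtype Pe)) (fun x => hmem2 x.1 x.2)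
  have hba2 : bMap.comp aMap = LinearMap.id := by
    apply LinearMap.ext
    rintro ⟨x, hx⟩
    apply Subtype.ext
    show x * a * b = x
    rw [mul_assoc, hab']
    exact (mem_range_rMul_iff he).mp hx
  have hab2 : aMap.comp bMap = LinearMap.id := by
    apply LinearMap.ext
    rintro ⟨x, hx⟩
    apply Subtype.ext
    show x * b * a = x
    rw [mul_assoc, hba']
    exact (mem_range_rMul_iff hf).mp hx
  let isoFE : Pf ≃ₗ[S] Pe := LinearEquiv.ofLinear bMap aMap hba2 hab2
  -- chain of isomorphisms (Pe × Me) ≃ (Pe × Mf)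
  let γ : (Pe × Me) ≃ₗ[S] (Pe × Mf) :=
    (Submodule.prodEquivOfIsCompl Pe Me (isCompl_rMul he)) ≪≫ₗ
      (Submodule.prodEquivOfIsCompl Pf Mf (isCompl_rMul hf)).symm ≪≫ₗ
        (isoFE.prodCongr (LinearEquiv.refl S Mf))
  obtain ⟨ψ⟩ := cancel_of_prod_equiv K S (Module.finrank K ↥Pe) Pe Me Mf rfl γ
  -- extract the elements c, d implementing Me ≃ Mf
  have mem1e : (1 - e) ∈ Me := (mem_range_rMul_iff (one_sub_idem he)).mpr (one_sub_idem he)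
  have mem1f : (1 - f) ∈ Mf := (mem_range_rMul_iff (one_sub_idem hf)).mpr (one_sub_idem hf)
  set c : S := (ψ ⟨1 - e, mem1e⟩ : S) with hc_def
  set d : S := (ψ.symm ⟨1 - f, mem1f⟩ : S) with hd_def
  have hc1 : c * (1 - f) = c := (mem_range_rMul_iff (one_sub_idem hf)).mp (ψ ⟨1 - e, mem1e⟩).2
  have hd1 : d * (1 - e) = d := (mem_range_rMul_iff (one_sub_idem he)).mp (ψ.symm ⟨1 - f, mem1f⟩).2
  have hcd : c * d = 1 - e := by
    have h0 : ψ.symm (ψ ⟨1 - e, mem1e⟩) = ⟨1 - e, mem1e⟩ := ψ.symm_apply_apply _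
    have h1 : ψ ⟨1 - e, mem1e⟩ = c • (⟨1 - f, mem1f⟩ : Mf) := by
      apply Subtype.ext
      show c = c • (1 - f)
      rw [smul_eq_mul, hc1]
    rw [h1, map_smul] at h0
    have h2 := congrArg (Subtype.val) h0
    simpa [smul_eq_mul] using h2
  have hdc : d * c = 1 - f := by
    have h0 : ψ (ψ.symm ⟨1 - f, mem1f⟩) = ⟨1 - f, mem1f⟩ := ψ.apply_symm_apply _
    have h1 : ψ.symm ⟨1 - f, mem1f⟩ = d • (⟨1 - e, mem1e⟩ : Me) := by
      apply Subtype.ext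
      show d = d • (1 - e)
      rw [smul_eq_mul, hd1]
    rw [h1, map_smul] at h0
    have h2 := congrArg (Subtype.val) h0
    simpa [smul_eq_mul] using h2
  -- small consequences
  have hcf : c * f = 0 := by
    have := hc1
    rw [mul_sub, mul_one] at this
    exact sub_eq_self.mp this
  have hde : d * e = 0 := by
    have := hd1
    rw [mul_sub, mul_one] at this
    exact sub_eq_self.mp this
  have haf0 : a * (1 - f) = 0 := by rw [mul_sub, mul_one, haf, sub_self]
  have hbe0 : b * (1 - e) = 0 := by rw [mul_sub, mul_one, hbe, sub_self]
  -- the unit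
  set u : S := a + (1 - e) * c with hu_def
  set v : S := b + (1 - f) * d with hv_def
  have hcb : c * b = 0 := by rw [← hfb, ← mul_assoc, hcf, zero_mul]
  have hda : d * a = 0 := by rw [← hea, ← mul_assoc, hde, zero_mul]
  have huv : u * v = 1 := by
    rw [hu_def, hv_def, mul_add, add_mul, add_mul, hab']
    have t1 : a * ((1 - f) * d) = 0 := by rw [← mul_assoc, haf0, zero_mul]
    have t2 : (1 - e) * c * b = 0 := by rw [mul_assoc, hcb, mul_zero]
    have t3 : (1 - e) * c * ((1 - f) * d) = 1 - e := by
      rw [mul_assoc, ← mul_assoc c, hc1, hcd, one_sub_idem he]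
    rw [t1, t2, t3]
    abel
  have hvu : v * u = 1 := by
    rw [hu_def, hv_def, mul_add, add_mul, add_mul, hba']
    have t1 : b * ((1 - e) * c) = 0 := by rw [← mul_assoc, hbe0, zero_mul]
    have t2 : (1 - f) * d * a = 0 := by rw [mul_assoc, hda, mul_zero]
    have t3 : (1 - f) * d * ((1 - e) * c) = 1 - f := by
      rw [mul_assoc, ← mul_assoc d, hd1, hdc, one_sub_idem hf]
    rw [t1, t2, t3]
    abel
  have heu : e * u = a := by
    rw [hu_def, mul_add, hea, ← mul_assoc, mul_sub, mul_one, he, sub_self, zero_mul, add_zero]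
  have huf : u * f = a := by
    rw [hu_def, add_mul, haf, mul_assoc, hcf, mul_zero, add_zero]
  refine ⟨Units.mk u v huv hvu, ?_⟩
  show f = v * e * u
  calc f = v * (u * f) := by rw [← mul_assoc, hvu, one_mul]
  _ = v * (e * u) := by rw [huf, heu]
  _ = v * e * u := by rw [mul_assoc]

open CategoryTheory Limits CategoryTheory.Idempotents

/-- let `C` be a `K`-linear category (`K` a field of characteristic zero) and
`A` an object whose endomorphism algebra is finite dimensional over `K`.  Two idempotents
`e, e' : A ⟶ A` have isomorphic images `(A, e)`, `(A, e')` in the Karoubi envelope if and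
only if they are conjugate in `End A`, i.e. `e' = φ ∘ e ∘ φ⁻¹` for some invertible
`φ : A ⟶ A`. -/
theorem karoubi_mk_iso_iff_conjugate
    (K : Type*) [Field K] [CharZero K]
    {C : Type*} [Category C] [Preadditive C] [Linear K C]
    (A : C) [FiniteDimensional K (A ⟶ A)]
    (e e' : A ⟶ A) (he : e ≫ e = e) (he' : e' ≫ e' = e') :
    Nonempty (Karoubi.mk A e he ≅ Karoubi.mk A e' he') ↔
      ∃ φ : A ≅ A, e' = φ.inv ≫ e ≫ φ.hom := by
  constructor
  · rintro ⟨I⟩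
    haveI : FiniteDimensional K (End A) := ‹FiniteDimensional K (A ⟶ A)›
    have h1 : I.hom.f ≫ I.inv.f = e := by
      rw [← Karoubi.comp_f, I.hom_inv_id]; rfl
    have h2 : I.inv.f ≫ I.hom.f = e' := by
      rw [← Karoubi.comp_f, I.inv_hom_id]; rfl
    let e₁ : End A := e
    let e₁' : End A := e'
    let a₁ : End A := I.inv.f
    let b₁ : End A := I.hom.f
    have hee : e₁ * e₁ = e₁ := he
    have hee' : e₁' * e₁' = e₁' := he'
    have hab : a₁ * b₁ = e₁ := h1
    have hba : b₁ * a₁ = e₁' := h2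
    obtain ⟨u, hu⟩ := exists_unit_conj K hee hee' hab hba
    refine ⟨⟨(↑u⁻¹ : End A), (↑u : End A), ?_, ?_⟩, ?_⟩
    · show (↑u : End A) * ↑u⁻¹ = 1
      exact u.mul_inv
    · show (↑u⁻¹ : End A) * ↑u = 1
      exact u.inv_mul
    · exact hu
  · rintro ⟨φ, h⟩
    have key1 : φ.hom ≫ e' = e ≫ φ.hom := by
      rw [h, Iso.hom_inv_id_assoc]
    have key2 : e' ≫ φ.inv = φ.inv ≫ e := by
      rw [h]
      simp only [Category.assoc, Iso.hom_inv_id, Category.comp_id]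
    refine ⟨Iso.mk ⟨e ≫ φ.hom, ?_⟩ ⟨e' ≫ φ.inv, ?_⟩ ?_ ?_⟩
    · symm
      show e ≫ φ.hom = e ≫ (e ≫ φ.hom) ≫ e'
      rw [Category.assoc, key1, ← Category.assoc, he, ← Category.assoc, he]
    · symm
      show e' ≫ φ.inv = e' ≫ (e' ≫ φ.inv) ≫ e
      rw [Category.assoc, ← key2, ← Category.assoc, he', ← Category.assoc, he']
    · apply Karoubi.hom_ext
      show (e ≫ φ.hom) ≫ (e' ≫ φ.inv) = e
      rw [Category.assoc, key2, Iso.hom_inv_id_assoc, he]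
    · apply Karoubi.hom_ext
      show (e' ≫ φ.inv) ≫ (e ≫ φ.hom) = e'
      rw [Category.assoc, ← h, he']
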